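/- Let p₀, q₀, p₁, q₁, p₂, q₂ ∈ ℤ with p₁q₂ − p₂q₁ = 1, and define f₀ : ℤ² → ℤ by f₀(x, y) = min(0, p₁x + q₁y, p₂x + q₂y) + p₀x + q₀y. Let C = {v ∈ ℤ² : Δf₀(v) < 0}. Let n > 0 and let f : ℤ² → ℤ be superharmonic with f₀ − n ≤ f ≤ f₀ pointwise. Then there exists r > 0, depending only on n, such that the function h = f₀ − f is constant on each connected component (with respect to grid adjacency in ℤ²) of the set {v ∈ ℤ² : dist(v, C) ≥ r}. -/

import Mathlib

/-- The discrete Laplacian on `ℤ × ℤ`: sum over the four grid neighbors minus `4` times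
the value at the point. -/
def lap (H : ℤ × ℤ → ℤ) (v : ℤ × ℤ) : ℤ :=
  H (v.1 + 1, v.2) + H (v.1 - 1, v.2) + H (v.1, v.2 + 1) + H (v.1, v.2 - 1) - 4 * H v

/-- Two points of `ℤ²` are adjacent if their Euclidean distance is `1`. -/
def Adj (a b : ℤ × ℤ) : Prop :=
  (a.1 - b.1) ^ 2 + (a.2 - b.2) ^ 2 = 1

/-- Euclidean distance between two points of `ℤ²`. -/
noncomputable def dst (v w : ℤ × ℤ) : ℝ :=
  Real.sqrt (((v.1 - w.1 : ℤ) : ℝ) ^ 2 + ((v.2 - w.2 : ℤ) : ℝ) ^ 2)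

/-- The corner function `f₀(x,y) = min(0, p₁x + q₁y, p₂x + q₂y) + p₀x + q₀y`. -/
def f0 (p₀ q₀ p₁ q₁ p₂ q₂ : ℤ) (v : ℤ × ℤ) : ℤ :=
  min (min 0 (p₁ * v.1 + q₁ * v.2)) (p₂ * v.1 + q₂ * v.2) + p₀ * v.1 + q₀ * v.2

/-- The set where the Laplacian of `f₀` is negative (the discrete tropical corner). -/
def Cset (p₀ q₀ p₁ q₁ p₂ q₂ : ℤ) : Set (ℤ × ℤ) :=
  {v | lap (f0 p₀ q₀ p₁ q₁ p₂ q₂) v < 0}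

/-- L¹ distance on `ℤ × ℤ`, valued in `ℕ`. -/
def d1 (u v : ℤ × ℤ) : ℕ := (u.1 - v.1).natAbs + (u.2 - v.2).natAbs

lemma sq_add_sq_eq_one {a b : ℤ} (h : a ^ 2 + b ^ 2 = 1) :
    (a = 0 ∧ b = 1) ∨ (a = 0 ∧ b = -1) ∨ (a = 1 ∧ b = 0) ∨ (a = -1 ∧ b = 0) := by
  have ha1 : -1 ≤ a := by nlinarith [sq_nonneg b, sq_nonneg (a + 1)]
  have ha2 : a ≤ 1 := by nlinarith [sq_nonneg b, sq_nonneg (a - 1)]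
  have hb1 : -1 ≤ b := by nlinarith [sq_nonneg a, sq_nonneg (b + 1)]
  have hb2 : b ≤ 1 := by nlinarith [sq_nonneg a, sq_nonneg (b - 1)]
  interval_cases a <;> interval_cases b <;> revert h <;> norm_num

lemma adj_cases {v w : ℤ × ℤ} (h : Adj v w) :
    w = (v.1 + 1, v.2) ∨ w = (v.1 - 1, v.2) ∨ w = (v.1, v.2 + 1) ∨ w = (v.1, v.2 - 1) := by
  have := sq_add_sq_eq_one h
  obtain ⟨a, b⟩ := w
  simp only [Prod.mk.injEq] at *
  omega

lemma dst_le_d1 (a u : ℤ × ℤ) : dst a u ≤ (d1 u a : ℝ) := by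
  unfold dst d1
  have h1 : Real.sqrt (((a.1 - u.1 : ℤ) : ℝ) ^ 2 + ((a.2 - u.2 : ℤ) : ℝ) ^ 2)
      ≤ |((a.1 - u.1 : ℤ) : ℝ)| + |((a.2 - u.2 : ℤ) : ℝ)| := by
    rw [show |((a.1 - u.1 : ℤ) : ℝ)| + |((a.2 - u.2 : ℤ) : ℝ)|
        = Real.sqrt ((|((a.1 - u.1 : ℤ) : ℝ)| + |((a.2 - u.2 : ℤ) : ℝ)|) ^ 2) by
          rw [Real.sqrt_sq (by positivity)]]
    apply Real.sqrt_le_sqrt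
    nlinarith [abs_nonneg ((a.1 - u.1 : ℤ) : ℝ), abs_nonneg ((a.2 - u.2 : ℤ) : ℝ),
      sq_abs ((a.1 - u.1 : ℤ) : ℝ), sq_abs ((a.2 - u.2 : ℤ) : ℝ)]
  refine h1.trans ?_
  have e1 : (u.1 - a.1).natAbs = (a.1 - u.1).natAbs := by omega
  have e2 : (u.2 - a.2).natAbs = (a.2 - u.2).natAbs := by omega
  rw [e1, e2]
  push_cast [Nat.cast_natAbs]
  simp

lemma f0_super (p₀ q₀ p₁ q₁ p₂ q₂ : ℤ) (u : ℤ × ℤ) : lap (f0 p₀ q₀ p₁ q₁ p₂ q₂) u ≤ 0 := by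
  have hle : ∀ x y : ℤ,
      f0 p₀ q₀ p₁ q₁ p₂ q₂ (x, y) ≤ p₀ * x + q₀ * y ∧
      f0 p₀ q₀ p₁ q₁ p₂ q₂ (x, y) ≤ (p₁ * x + q₁ * y) + (p₀ * x + q₀ * y) ∧
      f0 p₀ q₀ p₁ q₁ p₂ q₂ (x, y) ≤ (p₂ * x + q₂ * y) + (p₀ * x + q₀ * y) := by
    intro x y
    simp only [f0]
    refine ⟨?_, ?_, ?_⟩
    · have := min_le_left (min (0:ℤ) (p₁ * x + q₁ * y)) (p₂ * x + q₂ * y)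
      have := min_le_left (0:ℤ) (p₁ * x + q₁ * y)
      omega
    · have := min_le_left (min (0:ℤ) (p₁ * x + q₁ * y)) (p₂ * x + q₂ * y)
      have := min_le_right (0:ℤ) (p₁ * x + q₁ * y)
      omega
    · have := min_le_right (min (0:ℤ) (p₁ * x + q₁ * y)) (p₂ * x + q₂ * y)
      omega
  have hu : f0 p₀ q₀ p₁ q₁ p₂ q₂ u
      = min (min 0 (p₁ * u.1 + q₁ * u.2)) (p₂ * u.1 + q₂ * u.2) + p₀ * u.1 + q₀ * u.2 := rfl
  simp only [lap]
  rcases min_cases (min (0:ℤ) (p₁ * u.1 + q₁ * u.2)) (p₂ * u.1 + q₂ * u.2) with ⟨h1, _⟩ | ⟨h1, _⟩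
  · rcases min_cases (0:ℤ) (p₁ * u.1 + q₁ * u.2) with ⟨h2, _⟩ | ⟨h2, _⟩
    · have e : f0 p₀ q₀ p₁ q₁ p₂ q₂ u = p₀ * u.1 + q₀ * u.2 := by rw [hu, h1, h2]; ring
      have b1 := (hle (u.1 + 1) u.2).1
      have b2 := (hle (u.1 - 1) u.2).1
      have b3 := (hle u.1 (u.2 + 1)).1
      have b4 := (hle u.1 (u.2 - 1)).1
      linarith
    · have e : f0 p₀ q₀ p₁ q₁ p₂ q₂ u
          = (p₁ * u.1 + q₁ * u.2) + (p₀ * u.1 + q₀ * u.2) := by rw [hu, h1, h2]; ring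
      have b1 := (hle (u.1 + 1) u.2).2.1
      have b2 := (hle (u.1 - 1) u.2).2.1
      have b3 := (hle u.1 (u.2 + 1)).2.1
      have b4 := (hle u.1 (u.2 - 1)).2.1
      linarith
  · have e : f0 p₀ q₀ p₁ q₁ p₂ q₂ u
        = (p₂ * u.1 + q₂ * u.2) + (p₀ * u.1 + q₀ * u.2) := by rw [hu, h1]; ring
    have b1 := (hle (u.1 + 1) u.2).2.2
    have b2 := (hle (u.1 - 1) u.2).2.2
    have b3 := (hle u.1 (u.2 + 1)).2.2
    have b4 := (hle u.1 (u.2 - 1)).2.2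
    linarith

lemma flood_step {h : ℤ × ℤ → ℤ} {u : ℤ × ℤ} {M : ℤ} (hl : 0 ≤ lap h u)
    (h1 : h (u.1 + 1, u.2) ≤ M) (h2 : h (u.1 - 1, u.2) ≤ M)
    (h3 : h (u.1, u.2 + 1) ≤ M) (h4 : h (u.1, u.2 - 1) ≤ M) (hu : h u = M) :
    h (u.1 + 1, u.2) = M ∧ h (u.1 - 1, u.2) = M ∧ h (u.1, u.2 + 1) = M ∧ h (u.1, u.2 - 1) = M := by
  simp only [lap] at hl; omega

lemma growth (h : ℤ × ℤ → ℤ) (v w : ℤ × ℤ) (n : ℤ) (R : ℕ)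
    (hlap : ∀ u, d1 u v ≤ R → 0 ≤ lap h u)
    (hub : ∀ u, h u ≤ h v + n)
    (hadj : Adj v w) (hne : h v ≠ h w) : (R : ℤ) ≤ n + 1 := by
  have hn0 : 0 ≤ n := by have := hub v; omega
  by_contra hR
  push_neg at hR
  have key : ∀ k : ℕ, k + 1 ≤ R → ∃ u, d1 u v ≤ k + 1 ∧ h v + k ≤ h u := by
    intro k
    induction k with
    | zero => exact fun _ => ⟨v, by simp [d1], by omega⟩
    | succ k ih =>
      intro hk2
      obtain ⟨u₁, hu₁d, hu₁⟩ := ih (by omega)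
      obtain ⟨M, ⟨u₀, hu₀d, hu₀⟩, hMmax⟩ :=
        Int.exists_greatest_of_bdd (P := fun m => ∃ u, d1 u v ≤ k + 1 ∧ h u = m)
          ⟨h v + n, fun z ⟨u, _, hz⟩ => hz ▸ hub u⟩ ⟨h v, v, by simp [d1], rfl⟩
      by_cases hex : ∃ u', d1 u' v ≤ k + 2 ∧ M + 1 ≤ h u'
      · obtain ⟨u', hd', hval'⟩ := hex
        have hM1 : h v + (k : ℤ) ≤ M := by
          have := hMmax (h u₁) ⟨u₁, hu₁d, rfl⟩; omega
        exact ⟨u', hd', by push_cast; omega⟩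
      · push_neg at hex
        exfalso
        have flood : ∀ j : ℕ, ∀ u, d1 u v ≤ j → d1 u v ≤ k + 1 → h u = M → h v = M := by
          intro j
          induction j with
          | zero =>
            intro u hj _ hu
            have : u = v := by
              have h1 : (u.1 - v.1).natAbs = 0 ∧ (u.2 - v.2).natAbs = 0 := by
                simp only [d1] at hj; omega
              have : u.1 = v.1 ∧ u.2 = v.2 := by omega
              exact Prod.ext this.1 this.2
            rw [← this]; exact hu
          | succ j ihj =>
            intro u hj hk hu
            by_cases hcase : d1 u v ≤ j
            · exact ihj u hcase hk hu
            · have hl := hlap u (by omega)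
              have hnb := flood_step hl
                (Int.lt_add_one_iff.mp (hex (u.1 + 1, u.2) (by simp only [d1] at *; omega)))
                (Int.lt_add_one_iff.mp (hex (u.1 - 1, u.2) (by simp only [d1] at *; omega)))
                (Int.lt_add_one_iff.mp (hex (u.1, u.2 + 1) (by simp only [d1] at *; omega)))
                (Int.lt_add_one_iff.mp (hex (u.1, u.2 - 1) (by simp only [d1] at *; omega)))
                hu
              have hpos : 1 ≤ u.1 - v.1 ∨ u.1 - v.1 ≤ -1 ∨ 1 ≤ u.2 - v.2 ∨ u.2 - v.2 ≤ -1 := by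
                simp only [d1] at hcase; omega
              rcases hpos with h' | h' | h' | h'
              · exact ihj (u.1 - 1, u.2) (by simp only [d1] at *; omega)
                  (by simp only [d1] at *; omega) hnb.2.1
              · exact ihj (u.1 + 1, u.2) (by simp only [d1] at *; omega)
                  (by simp only [d1] at *; omega) hnb.1
              · exact ihj (u.1, u.2 - 1) (by simp only [d1] at *; omega)
                  (by simp only [d1] at *; omega) hnb.2.2.2
              · exact ihj (u.1, u.2 + 1) (by simp only [d1] at *; omega)
                  (by simp only [d1] at *; omega) hnb.2.2.1
        have hvM : h v = M := flood (k + 1) u₀ hu₀d hu₀d hu₀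
        have hlv := hlap v (by simp [d1])
        have hnbv := flood_step hlv
          (Int.lt_add_one_iff.mp (hex (v.1 + 1, v.2) (by simp only [d1]; omega)))
          (Int.lt_add_one_iff.mp (hex (v.1 - 1, v.2) (by simp only [d1]; omega)))
          (Int.lt_add_one_iff.mp (hex (v.1, v.2 + 1) (by simp only [d1]; omega)))
          (Int.lt_add_one_iff.mp (hex (v.1, v.2 - 1) (by simp only [d1]; omega)))
          hvM
        rcases adj_cases hadj with hw' | hw' | hw' | hw' <;>
          · rw [hw'] at hne
            first
            | exact hne (by rw [hvM]; exact hnbv.1.symm)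
            | exact hne (by rw [hvM]; exact hnbv.2.1.symm)
            | exact hne (by rw [hvM]; exact hnbv.2.2.1.symm)
            | exact hne (by rw [hvM]; exact hnbv.2.2.2.symm)
  have hR1 : 1 ≤ R := by omega
  obtain ⟨u, hud, huv⟩ := key (R - 1) (by omega)
  have := hub u
  have hcast : ((R - 1 : ℕ) : ℤ) = (R : ℤ) - 1 := by omega
  omega


/-- If `f` is superharmonic with `f₀ − n ≤ f ≤ f₀`, then there is `r > 0` depending only
on `n` such that `h = f₀ − f` is constant on every connected component (for grid
adjacency) of the set of points at Euclidean distance at least `r` from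
`C = {Δf₀ < 0}`. -/
theorem constant_far_from_corner (n : ℤ) (hn : 0 < n) :
    ∃ r : ℝ, 0 < r ∧
      ∀ p₀ q₀ p₁ q₁ p₂ q₂ : ℤ, p₁ * q₂ - p₂ * q₁ = 1 →
        ∀ f : ℤ × ℤ → ℤ,
          (∀ v, lap f v ≤ 0) →
          (∀ v, f0 p₀ q₀ p₁ q₁ p₂ q₂ v - n ≤ f v ∧ f v ≤ f0 p₀ q₀ p₁ q₁ p₂ q₂ v) →
          ∀ v w : ℤ × ℤ,
            v ∈ {u : ℤ × ℤ | ∀ c ∈ Cset p₀ q₀ p₁ q₁ p₂ q₂, r ≤ dst u c} →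
            w ∈ {u : ℤ × ℤ | ∀ c ∈ Cset p₀ q₀ p₁ q₁ p₂ q₂, r ≤ dst u c} →
            Relation.ReflTransGen
              (fun a b => Adj a b ∧
                (∀ c ∈ Cset p₀ q₀ p₁ q₁ p₂ q₂, r ≤ dst a c) ∧
                (∀ c ∈ Cset p₀ q₀ p₁ q₁ p₂ q₂, r ≤ dst b c)) v w →
            f0 p₀ q₀ p₁ q₁ p₂ q₂ v - f v = f0 p₀ q₀ p₁ q₁ p₂ q₂ w - f w := by
  refine ⟨(n : ℝ) + 3, by positivity, ?_⟩
  intro p₀ q₀ p₁ q₁ p₂ q₂ _ f hf hbound v w hvm hwm hpath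
  clear hvm hwm
  set r : ℝ := (n : ℝ) + 3 with hr
  set h : ℤ × ℤ → ℤ := fun u => f0 p₀ q₀ p₁ q₁ p₂ q₂ u - f u with hh
  set R : ℕ := n.toNat + 2 with hRdef
  have edge : ∀ a b : ℤ × ℤ, Adj a b →
      (∀ c ∈ Cset p₀ q₀ p₁ q₁ p₂ q₂, r ≤ dst a c) → h a = h b := by
    intro a b hadj hfar
    by_contra hne
    have hlap : ∀ u, d1 u a ≤ R → 0 ≤ lap h u := by
      intro u hd
      have hnC : u ∉ Cset p₀ q₀ p₁ q₁ p₂ q₂ := by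
        intro hC
        have h1 := hfar u hC
        have h2 := dst_le_d1 a u
        have h3 : (d1 u a : ℝ) ≤ (R : ℝ) := by exact_mod_cast Nat.cast_le.mpr hd
        have h4 : (R : ℝ) = (n : ℝ) + 2 := by
          have h5 : ((n.toNat : ℤ) : ℝ) = (n : ℝ) := by
            exact_mod_cast congrArg (Int.cast : ℤ → ℝ) (Int.toNat_of_nonneg hn.le)
          rw [hRdef]; push_cast at h5 ⊢; linarith
        rw [hr] at h1
        linarith
      have h0 : 0 ≤ lap (f0 p₀ q₀ p₁ q₁ p₂ q₂) u := not_lt.mp hnC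
      have h0' := f0_super p₀ q₀ p₁ q₁ p₂ q₂ u
      have heq : lap h u = lap (f0 p₀ q₀ p₁ q₁ p₂ q₂) u - lap f u := by
        simp only [hh, lap]; ring
      have := hf u
      omega
    have hub : ∀ u, h u ≤ h a + n := by
      intro u
      have h1 := hbound u
      have h2 := hbound a
      simp only [hh]
      omega
    have hbig := growth h a b n R hlap hub hadj hne
    have : ((R : ℕ) : ℤ) = n + 2 := by omega
    omega
  have main : h v = h w := by
    induction hpath with
    | refl => rfl
    | tail _ hstep ih => exact ih.trans (edge _ _ hstep.1 hstep.2.1)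
  simpa [hh] using main
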